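/- arXiv:2509.24538 — 2 statements merged into one kernel-verified Lean document; each statement's English description precedes it below -/
import Mathlib

section
/- Let m = m_N and k = k_N be sequences with m = o(N) and k = o(N), and let R_N be a sequence with R_N = o(N^{1/2}). For a real m×k matrix B set X = (1/N)·B·Bᵀ and define the remainder R'_N(B) := ((N−k−m−1)/2)·log det(Id_m − X) + ‖B‖_F²/2 − ((k+m+1)/(2N))·‖B‖_F² + Tr((B·Bᵀ)²)/(4N). Then there exists a constant C > 0 such that for all sufficiently large N and all B with ‖B‖_F ≤ R_N (so that in particular ‖X‖_op < 1), one has |R'_N(B)| ≤ C·((k+m)·R_N⁴/N² + R_N⁶/N²). -/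
open MeasureTheory Filter Matrix Asymptotics

/-- The multivariate gamma function `Γ_m(x) = π^{m(m-1)/4} ∏_{i=1}^m Γ(x - (i-1)/2)`. -/
noncomputable def mvGamma (m : ℕ) (x : ℝ) : ℝ :=
  Real.pi ^ ((m : ℝ) * ((m : ℝ) - 1) / 4) *
    ∏ i ∈ Finset.range m, Real.Gamma (x - (i : ℝ) / 2)

/-- Squared Frobenius norm of a matrix. -/
def frobSq {m k : ℕ} (B : Matrix (Fin m) (Fin k) ℝ) : ℝ :=
  ∑ i, ∑ j, (B i j) ^ 2

/-- Frobenius norm of a matrix. -/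
noncomputable def frobNorm {m k : ℕ} (B : Matrix (Fin m) (Fin k) ℝ) : ℝ :=
  Real.sqrt (frobSq B)

/- ### Auxiliary lemmas -/

lemma log_taylor_bound {x : ℝ} (h0 : 0 ≤ x) (h1 : x ≤ 1/2) :
    |Real.log (1 - x) + x + x ^ 2 / 2| ≤ 2 * x ^ 3 := by
  have h : |x| < 1 := by rw [abs_of_nonneg h0]; linarith
  have H := Real.abs_log_sub_add_sum_range_le h 2
  rw [Finset.sum_range_succ, Finset.sum_range_one] at H
  rw [abs_of_nonneg h0] at H
  have h2 : (0:ℝ) < 1 - x := by linarith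
  have hkey : x ^ 3 / (1 - x) ≤ 2 * x ^ 3 := by
    rw [div_le_iff₀ h2]
    nlinarith [pow_nonneg h0 3]
  calc |Real.log (1-x) + x + x^2/2|
      = |x ^ (0+1)/((0:ℕ)+1) + x ^ (1+1)/((1:ℕ)+1) + Real.log (1-x)| := by
        norm_num; ring_nf
    _ ≤ x ^ (2+1) / (1 - x) := H
    _ ≤ 2 * x ^ 3 := hkey

lemma spec_facts {n : ℕ} (X : Matrix (Fin n) (Fin n) ℝ) (hX : X.IsHermitian) :
    det (1 - X) = ∏ i, (1 - hX.eigenvalues i) ∧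
    trace X = ∑ i, hX.eigenvalues i ∧
    trace (X * X) = ∑ i, hX.eigenvalues i ^ 2 := by
  classical
  set U : Matrix (Fin n) (Fin n) ℝ := (hX.eigenvectorUnitary : Matrix (Fin n) (Fin n) ℝ) with hU
  have hUU : U * star U = 1 := mem_unitaryGroup_iff.mp hX.eigenvectorUnitary.2
  have hUU' : star U * U = 1 := mem_unitaryGroup_iff'.mp hX.eigenvectorUnitary.2
  have hD : (RCLike.ofReal ∘ hX.eigenvalues : Fin n → ℝ) = hX.eigenvalues := by
    funext i; simp
  have hspec : X = U * diagonal hX.eigenvalues * star U := by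
    have := hX.spectral_theorem
    rwa [hD] at this
  refine ⟨?_, ?_, ?_⟩
  · have h1 : (1 : Matrix (Fin n) (Fin n) ℝ) - X = U * (1 - diagonal hX.eigenvalues) * star U := by
      rw [Matrix.mul_sub, Matrix.sub_mul, Matrix.mul_one, hUU, ← hspec]
    rw [h1, det_mul, det_mul, mul_comm (det U), mul_assoc, ← det_mul, hUU, det_one, mul_one,
      ← diagonal_one, diagonal_sub, det_diagonal]
  · conv_lhs => rw [hspec]
    rw [trace_mul_cycle, hUU', Matrix.one_mul, trace_diagonal]
  · have h2 : X * X = U * diagonal (fun i => hX.eigenvalues i ^ 2) * star U := by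
      conv_lhs => rw [hspec]
      have hd2 : diagonal hX.eigenvalues * diagonal hX.eigenvalues
          = diagonal (fun i => hX.eigenvalues i ^ 2) := by
        rw [diagonal_mul_diagonal]
        simp [sq]
      calc U * diagonal hX.eigenvalues * star U * (U * diagonal hX.eigenvalues * star U)
          = U * (diagonal hX.eigenvalues * ((star U * U) * diagonal hX.eigenvalues)) * star U := by
            simp only [Matrix.mul_assoc]
        _ = U * diagonal (fun i => hX.eigenvalues i ^ 2) * star U := by
            rw [hUU', Matrix.one_mul, hd2]
    conv_lhs => rw [h2]
    rw [trace_mul_cycle, hUU', Matrix.one_mul, trace_diagonal]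

lemma trace_mul_transpose_self' {m k : ℕ} (B : Matrix (Fin m) (Fin k) ℝ) :
    Matrix.trace (B * Bᵀ) = frobSq B := by
  simp [Matrix.trace, Matrix.mul_apply, frobSq, Matrix.diag, sq]

lemma posSemidef_smul_mul_transpose {m k : ℕ} (B : Matrix (Fin m) (Fin k) ℝ) {c : ℝ} (hc : 0 ≤ c) :
    (c • (B * Bᵀ)).PosSemidef := by
  have hd : Real.sqrt c * Real.sqrt c = c := Real.mul_self_sqrt hc
  have h : (Real.sqrt c • B) * (Real.sqrt c • B)ᴴ = c • (B * Bᵀ) := by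
    rw [conjTranspose_smul, conjTranspose_eq_transpose_of_trivial]
    simp only [star_trivial, Matrix.smul_mul, Matrix.mul_smul, smul_smul, hd]
  rw [← h]
  exact posSemidef_self_mul_conjTranspose _

set_option maxHeartbeats 2000000 in
/-- **Log-determinant expansion remainder bound.** With `X = (1/N)·B·Bᵀ` and
`R'_N(B) = ((N-k-m-1)/2)·log det(Id_m - X) + ‖B‖_F²/2 - ((k+m+1)/(2N))·‖B‖_F²
+ Tr((BBᵀ)²)/(4N)`, one has `|R'_N(B)| ≤ C((k+m)R_N⁴/N² + R_N⁶/N²)` for all large `N`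
and all `B` with `‖B‖_F ≤ R_N`. -/
theorem stmt_5
    (m k : ℕ → ℕ)
    (hm : (fun N => (m N : ℝ)) =o[atTop] fun N => (N : ℝ))
    (hk : (fun N => (k N : ℝ)) =o[atTop] fun N => (N : ℝ))
    (R : ℕ → ℝ) (hR : R =o[atTop] fun N => (N : ℝ) ^ ((1 : ℝ) / 2)) :
    ∃ C > (0 : ℝ), ∀ᶠ N : ℕ in atTop,
      ∀ B : Matrix (Fin (m N)) (Fin (k N)) ℝ, frobNorm B ≤ R N →
        |(((N : ℝ) - k N - m N - 1) / 2) *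
              Real.log (Matrix.det (1 - ((N : ℝ))⁻¹ • (B * Bᵀ)))
            + frobSq B / 2
            - (((k N : ℝ) + m N + 1) / (2 * N)) * frobSq B
            + Matrix.trace ((B * Bᵀ) * (B * Bᵀ)) / (4 * N)| ≤
          C * (((k N : ℝ) + m N) * R N ^ 4 / (N : ℝ) ^ 2 + R N ^ 6 / (N : ℝ) ^ 2) := by
  refine ⟨4, by norm_num, ?_⟩
  have h1 := hR.bound (by norm_num : (0:ℝ) < 1/2)
  have h2 := hk.bound (by norm_num : (0:ℝ) < 1)
  have h3 := hm.bound (by norm_num : (0:ℝ) < 1)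
  filter_upwards [h1, h2, h3, Filter.eventually_ge_atTop 1] with N hRN hkN hmN hN1
  intro B hB
  set n : ℝ := (N : ℝ) with hn_def
  have hn1 : (1:ℝ) ≤ n := by rw [hn_def]; exact_mod_cast hN1
  have hn : (0:ℝ) < n := by linarith
  -- bounds from the o-conditions
  have hk' : (k N : ℝ) ≤ n := by
    have := hkN
    simp only [Real.norm_eq_abs, Nat.abs_cast, one_mul] at this
    calc (k N : ℝ) ≤ |n| := this
      _ = n := abs_of_pos hn
  have hm' : (m N : ℝ) ≤ n := by
    have := hmN
    simp only [Real.norm_eq_abs, Nat.abs_cast, one_mul] at this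
    calc (m N : ℝ) ≤ |n| := this
      _ = n := abs_of_pos hn
  have hR2 : R N ^ 2 ≤ n / 4 := by
    have hnn : (0:ℝ) ≤ n ^ ((1:ℝ)/2) := Real.rpow_nonneg hn.le _
    have hxx : |R N| ≤ 1/2 * n ^ ((1:ℝ)/2) := by
      have := hRN
      simp only [Real.norm_eq_abs] at this
      rwa [abs_of_nonneg hnn] at this
    have hsq : (n ^ ((1:ℝ)/2)) ^ 2 = n := by
      rw [← Real.rpow_natCast (n ^ ((1:ℝ)/2)) 2, ← Real.rpow_mul hn.le]
      norm_num
    have h4 : R N ^ 2 ≤ (1/2 * n ^ ((1:ℝ)/2)) ^ 2 := by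
      rw [← sq_abs]
      exact pow_le_pow_left₀ (abs_nonneg _) hxx 2
    calc R N ^ 2 ≤ (1/2 * n ^ ((1:ℝ)/2)) ^ 2 := h4
      _ = 1/4 * ((n ^ ((1:ℝ)/2)) ^ 2) := by ring
      _ = n / 4 := by rw [hsq]; ring
  have hRnn : 0 ≤ R N := le_trans (Real.sqrt_nonneg _) hB
  -- the matrix X and its eigenvalues
  set X : Matrix (Fin (m N)) (Fin (m N)) ℝ := n⁻¹ • (B * Bᵀ) with hX_def
  have hPSD : X.PosSemidef := posSemidef_smul_mul_transpose B (inv_nonneg.mpr hn.le)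
  obtain ⟨hdet, htrace, htrace2⟩ := spec_facts X hPSD.isHermitian
  set μ : Fin (m N) → ℝ := hPSD.isHermitian.eigenvalues with hμ_def
  have hμ0 : ∀ i, 0 ≤ μ i := fun i => hPSD.eigenvalues_nonneg i
  set S1 : ℝ := ∑ i, μ i with hS1_def
  set S2 : ℝ := ∑ i, μ i ^ 2 with hS2_def
  have hS10 : 0 ≤ S1 := Finset.sum_nonneg fun i _ => hμ0 i
  have hS20 : 0 ≤ S2 := Finset.sum_nonneg fun i _ => sq_nonneg _
  have hF0 : 0 ≤ frobSq B :=
    Finset.sum_nonneg fun i _ => Finset.sum_nonneg fun j _ => sq_nonneg _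
  have hFR : frobSq B ≤ R N ^ 2 := by
    have h5 : Real.sqrt (frobSq B) ^ 2 ≤ R N ^ 2 := pow_le_pow_left₀ (Real.sqrt_nonneg _) hB 2
    rwa [Real.sq_sqrt hF0] at h5
  have hS1F : n⁻¹ * frobSq B = S1 := by
    rw [← htrace, hX_def, trace_smul, trace_mul_transpose_self', smul_eq_mul]
  have hFn : frobSq B = n * S1 := by
    rw [← hS1F]; field_simp
  have hS1u : S1 ≤ R N ^ 2 / n := by
    rw [← hS1F, inv_mul_eq_div]
    gcongr
  have hS1half : S1 ≤ 1/2 := by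
    have : R N ^ 2 / n ≤ 1/4 := by
      rw [div_le_iff₀ hn]; linarith
    linarith [hS1u]
  have hμle : ∀ i, μ i ≤ S1 := fun i =>
    Finset.single_le_sum (fun j _ => hμ0 j) (Finset.mem_univ i)
  have hpos : ∀ i, (0:ℝ) < 1 - μ i := fun i => by
    have := hμle i; linarith
  have hlog : Real.log (Matrix.det (1 - X)) = ∑ i, Real.log (1 - μ i) := by
    rw [hdet]
    exact Real.log_prod (fun i _ => (hpos i).ne')
  set E : ℝ := ∑ i, (Real.log (1 - μ i) + μ i + μ i ^ 2 / 2) with hE_def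
  have hEeq : (∑ i, Real.log (1 - μ i)) = E - S1 - S2 / 2 := by
    rw [hE_def, hS1_def, hS2_def, Finset.sum_add_distrib, Finset.sum_add_distrib,
      ← Finset.sum_div]
    ring
  have hEbound : |E| ≤ 2 * S1 ^ 3 := by
    calc |E| ≤ ∑ i, |Real.log (1 - μ i) + μ i + μ i ^ 2 / 2| :=
          Finset.abs_sum_le_sum_abs _ _
      _ ≤ ∑ i, 2 * μ i ^ 3 :=
          Finset.sum_le_sum fun i _ => log_taylor_bound (hμ0 i) ((hμle i).trans hS1half)
      _ ≤ ∑ i, 2 * (μ i * S1 ^ 2) := by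
          refine Finset.sum_le_sum fun i _ => ?_
          have h6 : μ i ^ 2 ≤ S1 ^ 2 := pow_le_pow_left₀ (hμ0 i) (hμle i) 2
          nlinarith [hμ0 i]
      _ = 2 * S1 ^ 3 := by
          rw [← Finset.mul_sum, ← Finset.sum_mul, ← hS1_def]; ring
  have hS2le : S2 ≤ S1 ^ 2 := by
    calc S2 = ∑ i, μ i ^ 2 := hS2_def
      _ ≤ ∑ i, μ i * S1 := by
          refine Finset.sum_le_sum fun i _ => ?_
          nlinarith [hμ0 i, hμle i]
      _ = S1 * S1 := by rw [← Finset.sum_mul, ← hS1_def]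
      _ = S1 ^ 2 := by ring
  have htr2 : Matrix.trace ((B * Bᵀ) * (B * Bᵀ)) = n ^ 2 * S2 := by
    have hXX : X * X = (n⁻¹ * n⁻¹) • ((B * Bᵀ) * (B * Bᵀ)) := by
      rw [hX_def, Matrix.smul_mul, Matrix.mul_smul, smul_smul]
    have h7 := htrace2
    rw [hXX, trace_smul, smul_eq_mul] at h7
    have hT : Matrix.trace ((B * Bᵀ) * (B * Bᵀ))
        = n ^ 2 * (n⁻¹ * n⁻¹ * Matrix.trace ((B * Bᵀ) * (B * Bᵀ))) := by
      field_simp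
    rw [hT, h7]
  -- the key algebraic identity
  have key : ((n - k N - m N - 1) / 2) * Real.log (Matrix.det (1 - X))
        + frobSq B / 2 - (((k N : ℝ) + m N + 1) / (2 * n)) * frobSq B
        + Matrix.trace ((B * Bᵀ) * (B * Bᵀ)) / (4 * n)
      = (((k N : ℝ) + m N + 1) / 4) * S2 + ((n - k N - m N - 1) / 2) * E := by
    rw [hlog, hEeq, hFn, htr2]
    field_simp
    ring
  have hA : |(n - (k N : ℝ) - m N - 1) / 2| ≤ 3 * n / 2 := by
    have habs : |n - (k N : ℝ) - m N - 1| ≤ 3 * n := by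
      rw [abs_le]
      constructor
      · linarith [(Nat.cast_nonneg (k N) : (0:ℝ) ≤ (k N : ℝ)),
          (Nat.cast_nonneg (m N) : (0:ℝ) ≤ (m N : ℝ))]
      · linarith [(Nat.cast_nonneg (k N) : (0:ℝ) ≤ (k N : ℝ)),
          (Nat.cast_nonneg (m N) : (0:ℝ) ≤ (m N : ℝ))]
    calc |(n - (k N : ℝ) - m N - 1) / 2| = |n - (k N : ℝ) - m N - 1| / 2 := by
          rw [abs_div]; norm_num
      _ ≤ 3 * n / 2 := by linarith
  have step1 : |(((k N : ℝ) + m N + 1) / 4) * S2 + ((n - k N - m N - 1) / 2) * E|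
      ≤ (((k N : ℝ) + m N + 1) / 4) * S2 + 3 * n * S1 ^ 3 := by
    refine (abs_add_le _ _).trans ?_
    have e1 : |(((k N : ℝ) + m N + 1) / 4) * S2| = (((k N : ℝ) + m N + 1) / 4) * S2 :=
      abs_of_nonneg (by positivity)
    have e2 : |((n - (k N : ℝ) - m N - 1) / 2) * E| ≤ (3 * n / 2) * (2 * S1 ^ 3) := by
      rw [abs_mul]
      exact mul_le_mul hA hEbound (abs_nonneg _) (by positivity)
    have e3 : (3 * n / 2) * (2 * S1 ^ 3) = 3 * n * S1 ^ 3 := by ring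
    linarith [e1, e2, e3]
  -- final numeric bound
  set u : ℝ := R N ^ 2 / n with hu_def
  have hu0 : 0 ≤ u := by positivity
  have he1 : R N ^ 4 / n ^ 2 = u ^ 2 := by
    rw [hu_def]; field_simp
  have he2 : R N ^ 6 / n ^ 2 = n * u ^ 3 := by
    rw [hu_def]; field_simp
  by_cases hkm : k N + m N = 0
  · -- degenerate case: m N = 0, everything vanishes
    have hm0 : m N = 0 := by omega
    haveI hEmpty : IsEmpty (Fin (m N)) := by rw [hm0]; infer_instance
    have hS1z : S1 = 0 := by rw [hS1_def]; exact Finset.sum_of_isEmpty _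
    have hS2z : S2 = 0 := by rw [hS2_def]; exact Finset.sum_of_isEmpty _
    have hEz : E = 0 := by rw [hE_def]; exact Finset.sum_of_isEmpty _
    refine le_trans (le_of_eq (congrArg abs key)) ?_
    rw [hS2z, hEz]
    simp only [mul_zero, add_zero, abs_zero]
    positivity
  · have hK1 : (1:ℝ) ≤ (k N : ℝ) + m N := by
      have : 1 ≤ k N + m N := Nat.one_le_iff_ne_zero.mpr hkm
      exact_mod_cast this
    refine le_trans (le_of_eq (congrArg abs key)) ?_
    calc |(((k N : ℝ) + m N + 1) / 4) * S2 + ((n - k N - m N - 1) / 2) * E|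
        ≤ (((k N : ℝ) + m N + 1) / 4) * S2 + 3 * n * S1 ^ 3 := step1
      _ ≤ (((k N : ℝ) + m N + 1) / 4) * u ^ 2 + 3 * n * u ^ 3 := by
          have hS2u : S2 ≤ u ^ 2 := hS2le.trans (pow_le_pow_left₀ hS10 hS1u 2)
          have hS3u : S1 ^ 3 ≤ u ^ 3 := pow_le_pow_left₀ hS10 hS1u 3
          gcongr
      _ ≤ 4 * (((k N : ℝ) + m N) * u ^ 2 + n * u ^ 3) := by
          nlinarith [mul_nonneg hn.le (pow_nonneg hu0 3), pow_nonneg hu0 2,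
            mul_nonneg (pow_nonneg hu0 2) (sub_nonneg.mpr hK1)]
      _ = 4 * (((k N : ℝ) + m N) * (R N ^ 4 / n ^ 2) + R N ^ 6 / n ^ 2) := by
          rw [he1, he2]
      _ = 4 * (((k N : ℝ) + m N) * R N ^ 4 / n ^ 2 + R N ^ 6 / n ^ 2) := by ring
end

section
/- Fix m, k ∈ ℕ and for each N ≥ m+k let Z_N be the m×k upper-left block of a Haar-distributed matrix in O(N). Let β_N be a sequence of positive reals with β_N → ∞ and β_N = o(√N). Then for every ε > 0, taking the compact set K = [−√(2mε), √(2mε)]^{m×k} ⊆ ℝ^{m×k}, one has limsup_{N→∞} (β_N²/N)·log ℙ(β_N·Z_N ∉ K) ≤ −ε. In particular, the sequence β_N·Z_N is exponentially tight with respect to the speed N/β_N². -/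
open MeasureTheory Filter Matrix Asymptotics

noncomputable instance matrixMeasurableSpace {N : ℕ} :
    MeasurableSpace (Matrix (Fin N) (Fin N) ℝ) :=
  show MeasurableSpace (Fin N → Fin N → ℝ) from inferInstance


/-- The upper-left `m × k` block of an `N × N` matrix (padded with zeros if needed). -/
def blockEmb (m k : ℕ) {N : ℕ} (A : Matrix (Fin N) (Fin N) ℝ) :
    Matrix (Fin m) (Fin k) ℝ :=
  Matrix.of fun i j => if h : (i : ℕ) < N ∧ (j : ℕ) < N then A ⟨i, h.1⟩ ⟨j, h.2⟩ else 0

def clamp (t : ℝ) : ℝ := max (-1) (min 1 t)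

lemma clamp_abs_le (t : ℝ) : |clamp t| ≤ 1 := by
  rw [abs_le]; constructor
  · exact le_max_left _ _
  · exact max_le (by norm_num) (min_le_left _ _)

lemma clamp_eq_self {t : ℝ} (h : |t| ≤ 1) : clamp t = t := by
  rw [abs_le] at h
  rw [clamp, min_eq_right h.2, max_eq_right h.1]

lemma continuous_clamp : Continuous clamp :=
  continuous_const.max (continuous_const.min continuous_id)

lemma measurable_entry {N : ℕ} (i j : Fin N) :
    Measurable fun A : Matrix (Fin N) (Fin N) ℝ => A i j :=
  (measurable_pi_apply (a := j)).comp (measurable_pi_apply (a := i))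

lemma measurable_mul_left {N : ℕ} (B : Matrix (Fin N) (Fin N) ℝ) :
    Measurable fun A : Matrix (Fin N) (Fin N) ℝ => B * A := by
  apply measurable_pi_lambda
  intro i
  apply measurable_pi_lambda
  intro j
  have : (fun A : Matrix (Fin N) (Fin N) ℝ => (B * A) i j)
      = fun A => ∑ l, B i l * A l j := by
    funext A; exact Matrix.mul_apply
  rw [this]
  exact Finset.measurable_sum _ fun l _ => (measurable_entry l j).const_mul _

lemma measurableSet_orth {N : ℕ} :
    MeasurableSet {A : Matrix (Fin N) (Fin N) ℝ | A * Aᵀ = 1} := by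
  have h : {A : Matrix (Fin N) (Fin N) ℝ | A * Aᵀ = 1}
      = ⋂ i, ⋂ j, {A : Matrix (Fin N) (Fin N) ℝ |
          (∑ l, A i l * A j l) = (1 : Matrix (Fin N) (Fin N) ℝ) i j} := by
    ext A
    simp only [Set.mem_setOf_eq, Set.mem_iInter]
    constructor
    · intro hA i j
      rw [← hA]
      rw [Matrix.mul_apply]
      simp [Matrix.transpose_apply]
    · intro hA
      ext i j
      rw [Matrix.mul_apply]
      simp only [Matrix.transpose_apply]
      exact hA i j
  rw [h]
  refine MeasurableSet.iInter fun i => MeasurableSet.iInter fun j => ?_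
  exact (Finset.measurable_sum _ fun l _ =>
    (measurable_entry i l).mul (measurable_entry j l)) (measurableSet_singleton _)

section Support

variable {N : ℕ} {μ : Measure (Matrix (Fin N) (Fin N) ℝ)} [IsProbabilityMeasure μ]

lemma ae_orth (hsupp : μ {A | A * Aᵀ = 1} = 1) : ∀ᵐ A ∂μ, A * Aᵀ = 1 := by
  rw [ae_iff]
  have : {A : Matrix (Fin N) (Fin N) ℝ | ¬ A * Aᵀ = 1} = {A | A * Aᵀ = 1}ᶜ := rfl
  rw [this, measure_compl measurableSet_orth (measure_ne_top μ _), hsupp, measure_univ,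
    tsub_self]

lemma ae_col_sum (hsupp : μ {A | A * Aᵀ = 1} = 1) (c : Fin N) :
    ∀ᵐ A ∂μ, (∑ b, (A b c) ^ 2) = 1 := by
  filter_upwards [ae_orth hsupp] with A hA
  have h2 : Aᵀ * A = 1 := by rwa [← Matrix.transpose_transpose A, Matrix.transpose_transpose,
    mul_eq_one_comm] at hA
  have := congrArg (fun M => M c c) h2
  simp only [Matrix.mul_apply, Matrix.transpose_apply, Matrix.one_apply_eq] at this
  rw [← this]
  congr 1; funext b; ring

lemma ae_entry_abs_le (hsupp : μ {A | A * Aᵀ = 1} = 1) (a c : Fin N) :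
    ∀ᵐ A ∂μ, |A a c| ≤ 1 := by
  filter_upwards [ae_col_sum hsupp c] with A hA
  have h1 : (A a c) ^ 2 ≤ 1 := by
    rw [← hA]
    exact Finset.single_le_sum (f := fun b => (A b c)^2) (fun b _ => sq_nonneg _)
      (Finset.mem_univ a)
  nlinarith [abs_nonneg (A a c), sq_abs (A a c)]

lemma ae_clamp_entry (hsupp : μ {A | A * Aᵀ = 1} = 1) (a c : Fin N) :
    ∀ᵐ A ∂μ, clamp (A a c) = A a c := by
  filter_upwards [ae_entry_abs_le hsupp a c] with A hA using clamp_eq_self hA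

lemma integrable_of_bdd {f : Matrix (Fin N) (Fin N) ℝ → ℝ} (hf : Measurable f) (C : ℝ)
    (h : ∀ A, |f A| ≤ C) : Integrable f μ :=
  (integrable_const C).mono' hf.aestronglyMeasurable (ae_of_all _ fun A => by
    simpa [Real.norm_eq_abs] using h A)

end Support



private lemma sum_row_mul {N : ℕ} (a b : Fin N) (hab : a ≠ b) (u v : ℝ) (g : Fin N → ℝ) :
    ∑ l, (if l = a then u else if l = b then v else 0) * g l = u * g a + v * g b := by
  have key : ∀ l : Fin N, (if l = a then u else if l = b then v else 0) * g l
      = (if l = a then u * g l else 0) + (if l = b then v * g l else 0) := by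
    intro l
    by_cases h1 : l = a
    · have hlb : l ≠ b := by rw [h1]; exact hab
      simp [h1, hab]
    · by_cases h2 : l = b
      · simp [h1, h2, Ne.symm hab]
      · simp [h1, h2]
  rw [Finset.sum_congr rfl fun l _ => key l, Finset.sum_add_distrib,
    Finset.sum_ite_eq' Finset.univ a, Finset.sum_ite_eq' Finset.univ b]
  simp

private lemma sum_single_mul {N : ℕ} (x : Fin N) (g : Fin N → ℝ) :
    ∑ l, (if l = x then (1:ℝ) else 0) * g l = g x := by
  simp only [ite_mul, one_mul, zero_mul, Finset.sum_ite_eq', Finset.mem_univ, if_true]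

noncomputable def rotM {N : ℕ} (a b : Fin N) (θ : ℝ) : Matrix (Fin N) (Fin N) ℝ :=
  Matrix.of fun x y =>
    if x = a then (if y = a then Real.cos θ else if y = b then -Real.sin θ else 0)
    else if x = b then (if y = a then Real.sin θ else if y = b then Real.cos θ else 0)
    else if y = x then 1 else 0

lemma rotM_apply_fst {N : ℕ} (a b : Fin N) (θ : ℝ) (l : Fin N) :
    rotM a b θ a l = if l = a then Real.cos θ else if l = b then -Real.sin θ else 0 := by
  simp [rotM]

lemma rotM_apply_snd {N : ℕ} {a b : Fin N} (hab : a ≠ b) (θ : ℝ) (l : Fin N) :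
    rotM a b θ b l = if l = a then Real.sin θ else if l = b then Real.cos θ else 0 := by
  simp [rotM, Ne.symm hab]

lemma rotM_apply_other {N : ℕ} (a b : Fin N) (θ : ℝ) {x : Fin N} (hx : x ≠ a) (hx2 : x ≠ b)
    (l : Fin N) : rotM a b θ x l = if l = x then 1 else 0 := by
  simp [rotM, hx, hx2]

lemma rotM_orth {N : ℕ} (a b : Fin N) (hab : a ≠ b) (θ : ℝ) :
    rotM a b θ * (rotM a b θ)ᵀ = 1 := by
  have hba : b ≠ a := Ne.symm hab
  ext x y
  rw [Matrix.mul_apply, Matrix.one_apply]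
  simp only [Matrix.transpose_apply]
  by_cases hx : x = a
  · by_cases hy : y = a
    · simp only [hx, hy, rotM_apply_fst, sum_row_mul a b hab]
      simp [hba]
      linear_combination (Real.sin_sq_add_cos_sq θ)
    · by_cases hy2 : y = b
      · simp only [hx, hy2, rotM_apply_fst, rotM_apply_snd hab, sum_row_mul a b hab]
        simp [hab, hba]
        ring
      · simp only [hx, rotM_apply_fst, rotM_apply_other a b θ hy hy2, sum_row_mul a b hab]
        simp [hab, hba, fun h : a = y => hy h.symm, Ne.symm hy, Ne.symm hy2, hx ▸ hy]
  · by_cases hx2 : x = b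
    · by_cases hy : y = a
      · simp only [hx2, hy, rotM_apply_fst, rotM_apply_snd hab, sum_row_mul a b hab]
        simp [hab, hba]
        ring
      · by_cases hy2 : y = b
        · simp only [hx2, hy2, rotM_apply_snd hab, sum_row_mul a b hab]
          simp [hab, hba]
          linear_combination (Real.sin_sq_add_cos_sq θ)
        · simp only [hx2, rotM_apply_snd hab, rotM_apply_other a b θ hy hy2,
            sum_row_mul a b hab]
          simp [Ne.symm hy, Ne.symm hy2]
    · by_cases hy : y = a
      · simp only [hy, rotM_apply_fst, rotM_apply_other a b θ hx hx2, sum_single_mul]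
        simp [hx, hx2]
      · by_cases hy2 : y = b
        · simp only [hy2, rotM_apply_snd hab, rotM_apply_other a b θ hx hx2, sum_single_mul]
          simp [hx, hx2]
        · simp only [rotM_apply_other a b θ hx hx2, rotM_apply_other a b θ hy hy2,
            sum_single_mul]

lemma rotM_mul_fst {N : ℕ} {a b : Fin N} (hab : a ≠ b) (θ : ℝ)
    (A : Matrix (Fin N) (Fin N) ℝ) (c : Fin N) :
    (rotM a b θ * A) a c = Real.cos θ * A a c - Real.sin θ * A b c := by
  rw [Matrix.mul_apply]
  simp only [rotM_apply_fst]
  rw [sum_row_mul a b hab]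
  ring

lemma rotM_mul_snd {N : ℕ} {a b : Fin N} (hab : a ≠ b) (θ : ℝ)
    (A : Matrix (Fin N) (Fin N) ℝ) (c : Fin N) :
    (rotM a b θ * A) b c = Real.sin θ * A a c + Real.cos θ * A b c := by
  rw [Matrix.mul_apply]
  simp only [rotM_apply_snd hab]
  exact sum_row_mul a b hab _ _ _


open intervalIntegral Real in
lemma wallis_parts (q : ℕ) :
    ∫ θ in (0:ℝ)..(2*Real.pi), Real.cos θ ^ (2*q+2)
      = (2*q+1 : ℝ) * ∫ θ in (0:ℝ)..(2*Real.pi), Real.cos θ ^ (2*q) * Real.sin θ ^ 2 := by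
  have hd : ∀ x ∈ Set.uIcc (0:ℝ) (2*Real.pi), HasDerivAt (fun θ => Real.sin θ * Real.cos θ ^ (2*q+1))
      (Real.cos x ^ (2*q+2) - (2*q+1 : ℝ) * (Real.cos x ^ (2*q) * Real.sin x ^ 2)) x := by
    intro x _
    have h := (Real.hasDerivAt_sin x).fun_mul ((Real.hasDerivAt_cos x).fun_pow (2*q+1))
    simp only [Nat.add_sub_cancel] at h
    refine h.congr_deriv ?_
    push_cast
    ring
  have hcont : Continuous fun x : ℝ =>
      Real.cos x ^ (2*q+2) - (2*q+1 : ℝ) * (Real.cos x ^ (2*q) * Real.sin x ^ 2) := by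
    continuity
  have key := intervalIntegral.integral_eq_sub_of_hasDerivAt hd
    (hcont.intervalIntegrable _ _)
  simp only [Real.sin_two_pi, Real.sin_zero, zero_mul, sub_zero] at key
  have h1 : IntervalIntegrable (fun x : ℝ => Real.cos x ^ (2*q+2)) volume 0 (2*Real.pi) :=
    (by continuity : Continuous fun x : ℝ => Real.cos x ^ (2*q+2)).intervalIntegrable _ _
  have h2 : IntervalIntegrable (fun x : ℝ => (2*q+1 : ℝ) * (Real.cos x ^ (2*q) * Real.sin x ^ 2))
      volume 0 (2*Real.pi) :=
    (by continuity : Continuous fun x : ℝ => (2*q+1:ℝ) * (Real.cos x ^ (2*q) * Real.sin x ^ 2)).intervalIntegrable _ _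
  rw [intervalIntegral.integral_sub h1 h2, sub_eq_zero] at key
  rw [key, intervalIntegral.integral_const_mul]

lemma polar_integral (j l : ℕ) (hjl : 1 ≤ j + l) (x y : ℝ) :
    ∫ θ in (0:ℝ)..(2*Real.pi), (Real.cos θ * x - Real.sin θ * y) ^ (2*j) *
        (Real.sin θ * x + Real.cos θ * y) ^ (2*l)
      = (x^2 + y^2)^(j+l) * ∫ θ in (0:ℝ)..(2*Real.pi), Real.cos θ ^ (2*j) * Real.sin θ ^ (2*l) := by
  by_cases hz : x = 0 ∧ y = 0
  · obtain ⟨rfl, rfl⟩ := hz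
    have : ∀ θ : ℝ, (Real.cos θ * 0 - Real.sin θ * 0) ^ (2*j) *
        (Real.sin θ * 0 + Real.cos θ * 0) ^ (2*l) = 0 := by
      intro θ
      by_cases hj : j = 0
      · have hl : l ≠ 0 := by omega
        simp [hj, zero_pow (show 2*l ≠ 0 by omega)]
      · simp [zero_pow (show 2*j ≠ 0 by omega)]
    rw [intervalIntegral.integral_congr (fun θ _ => this θ)]
    simp [zero_pow (by omega : j + l ≠ 0)]
  · set z : ℂ := ⟨x, y⟩ with hzdef
    have hz0 : z ≠ 0 := by
      simp only [ne_eq, Complex.ext_iff, Complex.zero_re, Complex.zero_im]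
      tauto
    set r : ℝ := ‖z‖ with hr
    set φ : ℝ := Complex.arg z with hφ
    have hr0 : 0 < r := norm_pos_iff.mpr hz0
    have hx : x = r * Real.cos φ := by
      rw [hφ, Complex.cos_arg hz0]
      field_simp
      exact mul_comm _ _
    have hy : y = r * Real.sin φ := by
      rw [hφ, Complex.sin_arg]
      field_simp
      exact mul_comm _ _
    have hr2 : r^2 = x^2 + y^2 := by
      rw [hr, Complex.sq_norm, Complex.normSq_apply]
      simp [hzdef]
      ring
    have hper : Function.Periodic (fun t => Real.cos t ^ (2*j) * Real.sin t ^ (2*l)) (2*Real.pi) := by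
      intro t
      simp [Real.cos_add_two_pi, Real.sin_add_two_pi]
    have step1 : ∀ θ : ℝ, (Real.cos θ * x - Real.sin θ * y) ^ (2*j) *
        (Real.sin θ * x + Real.cos θ * y) ^ (2*l)
        = (r^2)^(j+l) * (Real.cos (θ + φ) ^ (2*j) * Real.sin (θ + φ) ^ (2*l)) := by
      intro θ
      rw [hx, hy, show Real.cos θ * (r * Real.cos φ) - Real.sin θ * (r * Real.sin φ)
          = r * (Real.cos θ * Real.cos φ - Real.sin θ * Real.sin φ) from by ring,
        show Real.sin θ * (r * Real.cos φ) + Real.cos θ * (r * Real.sin φ)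
          = r * (Real.sin θ * Real.cos φ + Real.cos θ * Real.sin φ) from by ring,
        mul_pow, mul_pow, ← Real.cos_add, ← Real.sin_add,
        show (r^2)^(j+l) = r^(2*j) * r^(2*l) from by
          rw [← pow_mul, ← pow_add]; ring_nf]
      ring
    rw [intervalIntegral.integral_congr (fun θ _ => step1 θ)]
    rw [intervalIntegral.integral_const_mul, hr2]
    congr 1
    rw [intervalIntegral.integral_comp_add_right
        (fun t => Real.cos t ^ (2*j) * Real.sin t ^ (2*l)) φ, zero_add,
      add_comm (2*Real.pi) φ, hper.intervalIntegral_add_eq φ 0, zero_add]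


section Pair

variable {N : ℕ} {μ : Measure (Matrix (Fin N) (Fin N) ℝ)} [IsProbabilityMeasure μ]

lemma measurable_clampEntry (a c : Fin N) :
    Measurable fun A : Matrix (Fin N) (Fin N) ℝ => clamp (A a c) :=
  continuous_clamp.measurable.comp (measurable_entry a c)

lemma integral_rot_invariant
    (hinv : ∀ B : Matrix (Fin N) (Fin N) ℝ, B * Bᵀ = 1 → μ.map (fun A => B * A) = μ)
    {B : Matrix (Fin N) (Fin N) ℝ} (hB : B * Bᵀ = 1)
    {f : Matrix (Fin N) (Fin N) ℝ → ℝ} (hf : Measurable f) :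
    ∫ A, f (B * A) ∂μ = ∫ A, f A ∂μ := by
  conv_rhs => rw [← hinv B hB]
  rw [integral_map (measurable_mul_left B).aemeasurable hf.aestronglyMeasurable]

lemma ae_pair_sq (hsupp : μ {A | A * Aᵀ = 1} = 1) {a b : Fin N} (hab : a ≠ b) (c : Fin N) :
    ∀ᵐ A ∂μ, (A a c)^2 + (A b c)^2 ≤ 1 := by
  filter_upwards [ae_col_sum hsupp c] with A hA
  rw [← hA]
  have hsub : ({a, b} : Finset (Fin N)) ⊆ Finset.univ := Finset.subset_univ _
  have := Finset.sum_le_sum_of_subset_of_nonneg hsub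
    (fun i _ _ => sq_nonneg (A i c))
  rwa [Finset.sum_pair hab] at this

lemma rot_moment (hsupp : μ {A | A * Aᵀ = 1} = 1)
    (hinv : ∀ B : Matrix (Fin N) (Fin N) ℝ, B * Bᵀ = 1 → μ.map (fun A => B * A) = μ)
    {a b : Fin N} (hab : a ≠ b) (c : Fin N) (j l : ℕ) (θ : ℝ) :
    ∫ A, (Real.cos θ * clamp (A a c) - Real.sin θ * clamp (A b c)) ^ (2*j) *
         (Real.sin θ * clamp (A a c) + Real.cos θ * clamp (A b c)) ^ (2*l) ∂μ
      = ∫ A, clamp (A a c) ^ (2*j) * clamp (A b c) ^ (2*l) ∂μ := by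
  have hf : Measurable (fun A : Matrix (Fin N) (Fin N) ℝ =>
      clamp (A a c) ^ (2*j) * clamp (A b c) ^ (2*l)) :=
    ((measurable_clampEntry a c).pow_const _).mul ((measurable_clampEntry b c).pow_const _)
  rw [← integral_rot_invariant hinv (rotM_orth a b hab θ) hf]
  apply integral_congr_ae
  filter_upwards [ae_pair_sq hsupp hab c, ae_entry_abs_le hsupp a c, ae_entry_abs_le hsupp b c]
    with A hsum ha hb
  have key : (Real.cos θ * A a c - Real.sin θ * A b c)^2
      + (Real.sin θ * A a c + Real.cos θ * A b c)^2 = (A a c)^2 + (A b c)^2 := by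
    linear_combination ((A a c)^2 + (A b c)^2) * (Real.sin_sq_add_cos_sq θ)
  have h1 : |Real.cos θ * A a c - Real.sin θ * A b c| ≤ 1 := by
    rw [← sq_le_one_iff_abs_le_one]
    nlinarith [sq_nonneg (Real.sin θ * A a c + Real.cos θ * A b c)]
  have h2 : |Real.sin θ * A a c + Real.cos θ * A b c| ≤ 1 := by
    rw [← sq_le_one_iff_abs_le_one]
    nlinarith [sq_nonneg (Real.cos θ * A a c - Real.sin θ * A b c)]
  rw [clamp_eq_self ha, clamp_eq_self hb, rotM_mul_fst hab, rotM_mul_snd hab,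
    clamp_eq_self h1, clamp_eq_self h2]

lemma moment_eq_W (hsupp : μ {A | A * Aᵀ = 1} = 1)
    (hinv : ∀ B : Matrix (Fin N) (Fin N) ℝ, B * Bᵀ = 1 → μ.map (fun A => B * A) = μ)
    {a b : Fin N} (hab : a ≠ b) (c : Fin N) (j l : ℕ) (hjl : 1 ≤ j + l) :
    (2 * Real.pi) * ∫ A, clamp (A a c) ^ (2*j) * clamp (A b c) ^ (2*l) ∂μ
      = (∫ θ in (0:ℝ)..(2*Real.pi), Real.cos θ ^ (2*j) * Real.sin θ ^ (2*l)) *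
        ∫ A, (clamp (A a c)^2 + clamp (A b c)^2)^(j+l) ∂μ := by
  set ν : Measure ℝ := volume.restrict (Set.Ioc (0:ℝ) (2*Real.pi)) with hν
  haveI : IsFiniteMeasure ν := by
    constructor
    rw [hν, Measure.restrict_apply_univ]
    exact measure_Ioc_lt_top
  set G : ℝ → Matrix (Fin N) (Fin N) ℝ → ℝ := fun θ A =>
    (Real.cos θ * clamp (A a c) - Real.sin θ * clamp (A b c)) ^ (2*j) *
    (Real.sin θ * clamp (A a c) + Real.cos θ * clamp (A b c)) ^ (2*l) with hG
  have hGmeas : Measurable (Function.uncurry G) := by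
    have hX : Measurable fun p : ℝ × Matrix (Fin N) (Fin N) ℝ => clamp (p.2 a c) :=
      (measurable_clampEntry a c).comp measurable_snd
    have hY : Measurable fun p : ℝ × Matrix (Fin N) (Fin N) ℝ => clamp (p.2 b c) :=
      (measurable_clampEntry b c).comp measurable_snd
    have hc : Measurable fun p : ℝ × Matrix (Fin N) (Fin N) ℝ => Real.cos p.1 :=
      Real.continuous_cos.measurable.comp measurable_fst
    have hs : Measurable fun p : ℝ × Matrix (Fin N) (Fin N) ℝ => Real.sin p.1 :=
      Real.continuous_sin.measurable.comp measurable_fst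
    exact (((hc.mul hX).sub (hs.mul hY)).pow_const _).mul
      (((hs.mul hX).add (hc.mul hY)).pow_const _)
  have hGbdd : ∀ p : ℝ × Matrix (Fin N) (Fin N) ℝ,
      |Function.uncurry G p| ≤ 2^(2*j) * 2^(2*l) := by
    rintro ⟨θ, A⟩
    have ha := clamp_abs_le (A a c)
    have hb := clamp_abs_le (A b c)
    have hc := Real.abs_cos_le_one θ
    have hs := Real.abs_sin_le_one θ
    have e1 : |Real.cos θ * clamp (A a c) - Real.sin θ * clamp (A b c)| ≤ 2 := by
      calc |Real.cos θ * clamp (A a c) - Real.sin θ * clamp (A b c)|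
          ≤ |Real.cos θ * clamp (A a c)| + |Real.sin θ * clamp (A b c)| := abs_sub _ _
        _ ≤ 2 := by
            rw [abs_mul, abs_mul]
            nlinarith [abs_nonneg (Real.cos θ), abs_nonneg (Real.sin θ),
              abs_nonneg (clamp (A a c)), abs_nonneg (clamp (A b c))]
    have e2 : |Real.sin θ * clamp (A a c) + Real.cos θ * clamp (A b c)| ≤ 2 := by
      calc |Real.sin θ * clamp (A a c) + Real.cos θ * clamp (A b c)|
          ≤ |Real.sin θ * clamp (A a c)| + |Real.cos θ * clamp (A b c)| := abs_add_le _ _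
        _ ≤ 2 := by
            rw [abs_mul, abs_mul]
            nlinarith [abs_nonneg (Real.cos θ), abs_nonneg (Real.sin θ),
              abs_nonneg (clamp (A a c)), abs_nonneg (clamp (A b c))]
    have e3 : |(Real.cos θ * clamp (A a c) - Real.sin θ * clamp (A b c)) ^ (2*j) *
        (Real.sin θ * clamp (A a c) + Real.cos θ * clamp (A b c)) ^ (2*l)|
        ≤ 2^(2*j) * 2^(2*l) := by
      rw [abs_mul, abs_pow, abs_pow]
      exact mul_le_mul (pow_le_pow_left₀ (abs_nonneg _) e1 _)
        (pow_le_pow_left₀ (abs_nonneg _) e2 _)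
        (pow_nonneg (abs_nonneg _) _) (pow_nonneg (by norm_num) _)
    exact e3
  have hGint : Integrable (Function.uncurry G) (ν.prod μ) :=
    (integrable_const (2^(2*j) * 2^(2*l) : ℝ)).mono' hGmeas.aestronglyMeasurable
      (ae_of_all _ fun p => by simpa [Real.norm_eq_abs] using hGbdd p)
  have hswap := MeasureTheory.integral_integral_swap (f := G) hGint
  have hLHS : (∫ θ, (∫ A, G θ A ∂μ) ∂ν)
      = (2 * Real.pi) * ∫ A, clamp (A a c) ^ (2*j) * clamp (A b c) ^ (2*l) ∂μ := by
    have hconst : ∀ θ, (∫ A, G θ A ∂μ)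
        = ∫ A, clamp (A a c) ^ (2*j) * clamp (A b c) ^ (2*l) ∂μ :=
      fun θ => rot_moment hsupp hinv hab c j l θ
    rw [integral_congr_ae (ae_of_all _ hconst), integral_const]
    rw [hν, Measure.real, Measure.restrict_apply_univ, Real.volume_Ioc, smul_eq_mul]
    rw [ENNReal.toReal_ofReal (by rw [sub_zero]; positivity)]
    ring_nf
  have hRHS : (∫ A, (∫ θ, G θ A ∂ν) ∂μ)
      = (∫ θ in (0:ℝ)..(2*Real.pi), Real.cos θ ^ (2*j) * Real.sin θ ^ (2*l)) *
        ∫ A, (clamp (A a c)^2 + clamp (A b c)^2)^(j+l) ∂μ := by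
    have hθ : ∀ A, (∫ θ, G θ A ∂ν)
        = (clamp (A a c)^2 + clamp (A b c)^2)^(j+l) *
          ∫ θ in (0:ℝ)..(2*Real.pi), Real.cos θ ^ (2*j) * Real.sin θ ^ (2*l) := by
      intro A
      have h0 : (0:ℝ) ≤ 2 * Real.pi := by positivity
      have hpolar := polar_integral j l hjl (clamp (A a c)) (clamp (A b c))
      rw [intervalIntegral.integral_of_le h0] at hpolar
      rw [hν]
      exact hpolar
    rw [integral_congr_ae (ae_of_all _ hθ), integral_mul_const, mul_comm]
  rw [← hLHS, hswap, hRHS]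

lemma pair_rel (hsupp : μ {A | A * Aᵀ = 1} = 1)
    (hinv : ∀ B : Matrix (Fin N) (Fin N) ℝ, B * Bᵀ = 1 → μ.map (fun A => B * A) = μ)
    {a b : Fin N} (hab : a ≠ b) (c : Fin N) (q : ℕ) :
    ∫ A, clamp (A a c) ^ (2*q+2) ∂μ
      = (2*q+1 : ℝ) * ∫ A, clamp (A a c) ^ (2*q) * clamp (A b c) ^ 2 ∂μ := by
  have h1 := moment_eq_W hsupp hinv hab c (q+1) 0 (by omega)
  have h2 := moment_eq_W hsupp hinv hab c q 1 (by omega)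
  have e1 : 2*(q+1) = 2*q+2 := by ring
  have e2 : 2*1 = 2 := by norm_num
  rw [e1] at h1
  rw [e2] at h2
  simp only [Nat.mul_zero, pow_zero, mul_one, Nat.add_zero] at h1
  have W1 := wallis_parts q
  have hpi : (2 * Real.pi) ≠ 0 := by positivity
  apply mul_left_cancel₀ hpi
  rw [h1, W1, mul_assoc, ← h2]
  ring

end Pair

lemma even_pow_nonneg (x : ℝ) (n : ℕ) : 0 ≤ x^(2*n) := by
  rw [mul_comm, pow_mul]
  positivity

lemma factorial_le_exp (p : ℕ) (hp : 1 ≤ p) :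
    (p.factorial : ℝ) ≤ (p:ℝ)^(p+1) * Real.exp (1 - p) := by
  induction p, hp using Nat.le_induction with
  | base => simp [Nat.factorial]
  | succ n hn ih =>
    have h1 : (0:ℝ) < n := by exact_mod_cast hn
    have h2 : Real.exp (1/((n:ℝ)+1)) ≤ ((n:ℝ)+1)/n := by
      have h3 := Real.add_one_le_exp (-(1/((n:ℝ)+1)))
      have h4 : (0:ℝ) < (n:ℝ)/((n:ℝ)+1) := by positivity
      have h5 : (n:ℝ)/((n:ℝ)+1) ≤ Real.exp (-(1/((n:ℝ)+1))) := by
        have : -(1/((n:ℝ)+1)) + 1 = (n:ℝ)/((n:ℝ)+1) := by field_simp; ring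
        linarith [h3, this.symm.le]
      have h6 : (Real.exp (-(1/((n:ℝ)+1))))⁻¹ ≤ ((n:ℝ)/((n:ℝ)+1))⁻¹ :=
        inv_anti₀ h4 h5
      rwa [Real.exp_neg, inv_inv, inv_div] at h6
    have key : Real.exp 1 ≤ (((n:ℝ)+1)/n)^(n+1) := by
      have e1 : Real.exp 1 = Real.exp (1/((n:ℝ)+1)) ^ (n+1) := by
        rw [← Real.exp_nat_mul]
        congr 1
        field_simp
        norm_num
      rw [e1]
      exact pow_le_pow_left₀ (Real.exp_pos _).le h2 _
    have hkey' : (n:ℝ)^(n+1) * Real.exp 1 ≤ ((n:ℝ)+1)^(n+1) := by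
      rw [div_pow] at key
      rw [mul_comm]
      exact (le_div_iff₀ (pow_pos h1 _)).1 key
    have hfact : ((n+1).factorial : ℝ) = ((n:ℝ)+1) * (n.factorial : ℝ) := by
      rw [Nat.factorial_succ]
      push_cast
      ring
    calc ((n+1).factorial : ℝ) = ((n:ℝ)+1) * (n.factorial : ℝ) := hfact
      _ ≤ ((n:ℝ)+1) * ((n:ℝ)^(n+1) * Real.exp (1 - n)) := by
          apply mul_le_mul_of_nonneg_left ih (by positivity)
      _ = ((n:ℝ)^(n+1) * Real.exp 1) * (((n:ℝ)+1) * Real.exp (-(n:ℝ))) := by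
          rw [show (1:ℝ) - n = 1 + (-(n:ℝ)) by ring, Real.exp_add]
          ring
      _ ≤ (((n:ℝ)+1)^(n+1)) * (((n:ℝ)+1) * Real.exp (-(n:ℝ))) := by
          apply mul_le_mul_of_nonneg_right hkey' (by positivity)
      _ = ((n:ℝ)+1)^(n+2) * Real.exp (1 - ((n:ℝ)+1)) := by
          rw [show (1:ℝ) - ((n:ℝ)+1) = -(n:ℝ) by ring, pow_succ]
          ring
      _ = (((n+1 : ℕ)):ℝ)^(n+1+1) * Real.exp (1 - ((n+1 : ℕ):ℝ)) := by
          push_cast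
          ring_nf

section Rec

variable {N : ℕ} {μ : Measure (Matrix (Fin N) (Fin N) ℝ)} [IsProbabilityMeasure μ]

lemma orth_col_sum {A : Matrix (Fin N) (Fin N) ℝ} (hA : A * Aᵀ = 1) (c : Fin N) :
    (∑ b, (A b c) ^ 2) = 1 := by
  have h2 : Aᵀ * A = 1 := by
    rwa [← Matrix.transpose_transpose A, Matrix.transpose_transpose,
      mul_eq_one_comm] at hA
  have h3 := congrArg (fun M => M c c) h2
  simp only [Matrix.mul_apply, Matrix.transpose_apply, Matrix.one_apply_eq] at h3
  rw [← h3]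
  congr 1; funext b; ring

lemma orth_abs_le {A : Matrix (Fin N) (Fin N) ℝ} (hA : A * Aᵀ = 1) (a c : Fin N) :
    |A a c| ≤ 1 := by
  have h1 : (A a c) ^ 2 ≤ 1 := by
    rw [← orth_col_sum hA c]
    exact Finset.single_le_sum (f := fun b => (A b c)^2) (fun b _ => sq_nonneg _)
      (Finset.mem_univ a)
  nlinarith [abs_nonneg (A a c), sq_abs (A a c)]

lemma mom_rec (hsupp : μ {A | A * Aᵀ = 1} = 1)
    (hinv : ∀ B : Matrix (Fin N) (Fin N) ℝ, B * Bᵀ = 1 → μ.map (fun A => B * A) = μ)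
    (a c : Fin N) (q : ℕ) :
    (N:ℝ) * ∫ A, clamp (A a c) ^ (2*(q+1)) ∂μ
      ≤ (2*q+1 : ℝ) * ∫ A, clamp (A a c) ^ (2*q) ∂μ := by
  have hNpos : 0 < N := a.pos
  have hint : ∀ b : Fin N,
      Integrable (fun A : Matrix (Fin N) (Fin N) ℝ =>
        clamp (A a c) ^ (2*q) * clamp (A b c) ^ 2) μ := by
    intro b
    apply integrable_of_bdd (((measurable_clampEntry a c).pow_const _).mul
      ((measurable_clampEntry b c).pow_const _)) 1
    intro A
    simp only [Pi.mul_apply]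
    rw [abs_mul, abs_pow, abs_pow]
    calc |clamp (A a c)| ^ (2*q) * |clamp (A b c)| ^ 2
        ≤ 1 ^ (2*q) * 1 ^ 2 := by
          apply mul_le_mul (pow_le_pow_left₀ (abs_nonneg _) (clamp_abs_le _) _)
            (pow_le_pow_left₀ (abs_nonneg _) (clamp_abs_le _) _)
            (pow_nonneg (abs_nonneg _) _) (by norm_num)
      _ = 1 := by norm_num
  have h0 : ∫ A, clamp (A a c) ^ (2*q) ∂μ
      = ∑ b, ∫ A, clamp (A a c) ^ (2*q) * clamp (A b c) ^ 2 ∂μ := by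
    rw [← integral_finset_sum Finset.univ (fun b _ => hint b)]
    apply integral_congr_ae
    filter_upwards [ae_orth hsupp] with A hA
    have hcl : ∀ b : Fin N, clamp (A b c) = A b c :=
      fun b => clamp_eq_self (orth_abs_le hA b c)
    calc clamp (A a c) ^ (2*q)
        = clamp (A a c) ^ (2*q) * ∑ b, (A b c)^2 := by rw [orth_col_sum hA c, mul_one]
      _ = ∑ b, clamp (A a c) ^ (2*q) * clamp (A b c) ^ 2 := by
          rw [Finset.mul_sum]
          exact Finset.sum_congr rfl fun b _ => by rw [hcl b]
  have hTa : ∫ A, clamp (A a c) ^ (2*q) * clamp (A a c) ^ 2 ∂μ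
      = ∫ A, clamp (A a c) ^ (2*(q+1)) ∂μ := by
    apply integral_congr_ae
    apply ae_of_all
    intro A
    ring
  have hsplit : ∑ b, ∫ A, clamp (A a c) ^ (2*q) * clamp (A b c) ^ 2 ∂μ
      = (∫ A, clamp (A a c) ^ (2*q) * clamp (A a c) ^ 2 ∂μ)
        + ∑ b ∈ Finset.univ.erase a, ∫ A, clamp (A a c) ^ (2*q) * clamp (A b c) ^ 2 ∂μ :=
    (Finset.add_sum_erase _ _ (Finset.mem_univ a)).symm
  have hTb : ∀ b ∈ Finset.univ.erase a,
      (2*q+1 : ℝ) * ∫ A, clamp (A a c) ^ (2*q) * clamp (A b c) ^ 2 ∂μ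
        = ∫ A, clamp (A a c) ^ (2*q+2) ∂μ := by
    intro b hb
    exact (pair_rel hsupp hinv (Finset.ne_of_mem_erase hb).symm c q).symm
  have hexp : (2*(q+1)) = 2*q+2 := by ring
  set M' := ∫ A, clamp (A a c) ^ (2*q+2) ∂μ with hM'
  have hM'nonneg : 0 ≤ M' := by
    apply integral_nonneg
    intro A
    have := even_pow_nonneg (clamp (A a c)) (q+1)
    rwa [show 2*(q+1) = 2*q+2 by ring] at this
  have hMq : (2*q+1 : ℝ) * ∫ A, clamp (A a c) ^ (2*q) ∂μ
      = (2*q+1 : ℝ) * M' + ((N:ℝ) - 1) * M' := by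
    rw [h0, hsplit, mul_add]
    congr 1
    · rw [hTa, hM', ← hexp]
    · rw [Finset.mul_sum, Finset.sum_congr rfl hTb, Finset.sum_const]
      rw [Finset.card_erase_of_mem (Finset.mem_univ a), Finset.card_univ, Fintype.card_fin]
      rw [nsmul_eq_mul]
      congr 1
      rw [Nat.cast_sub hNpos]
      norm_num
  rw [hexp, ← hM']
  have h2q : (0:ℝ) ≤ 2*q := by positivity
  nlinarith [mul_nonneg h2q hM'nonneg]

lemma mom_pow_bound (hsupp : μ {A | A * Aᵀ = 1} = 1)
    (hinv : ∀ B : Matrix (Fin N) (Fin N) ℝ, B * Bᵀ = 1 → μ.map (fun A => B * A) = μ)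
    (a c : Fin N) (p : ℕ) :
    (N:ℝ)^p * ∫ A, clamp (A a c) ^ (2*p) ∂μ ≤ 2^p * (p.factorial : ℝ) := by
  induction p with
  | zero =>
    simp [integral_const, measure_univ]
  | succ p ih =>
    have hMner : 0 ≤ ∫ A, clamp (A a c) ^ (2*p) ∂μ :=
      integral_nonneg fun A => even_pow_nonneg _ _
    have hrec := mom_rec hsupp hinv a c p
    have hNne : (0:ℝ) ≤ (N:ℝ)^p := by positivity
    calc (N:ℝ)^(p+1) * ∫ A, clamp (A a c) ^ (2*(p+1)) ∂μ
        = (N:ℝ)^p * ((N:ℝ) * ∫ A, clamp (A a c) ^ (2*(p+1)) ∂μ) := by ring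
      _ ≤ (N:ℝ)^p * ((2*p+1 : ℝ) * ∫ A, clamp (A a c) ^ (2*p) ∂μ) :=
          mul_le_mul_of_nonneg_left hrec hNne
      _ = (2*p+1 : ℝ) * ((N:ℝ)^p * ∫ A, clamp (A a c) ^ (2*p) ∂μ) := by ring
      _ ≤ (2*p+1 : ℝ) * (2^p * (p.factorial : ℝ)) := by
          apply mul_le_mul_of_nonneg_left ih (by positivity)
      _ ≤ (2*p+2 : ℝ) * (2^p * (p.factorial : ℝ)) := by
          have : (0:ℝ) ≤ 2^p * (p.factorial : ℝ) := by positivity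
          nlinarith
      _ = 2^(p+1) * ((p+1).factorial : ℝ) := by
          rw [Nat.factorial_succ]
          push_cast
          ring

lemma entry_tail (hsupp : μ {A | A * Aᵀ = 1} = 1)
    (hinv : ∀ B : Matrix (Fin N) (Fin N) ℝ, B * Bᵀ = 1 → μ.map (fun A => B * A) = μ)
    (a c : Fin N) {t : ℝ} (ht : 0 < t) (hγ : 1 ≤ (N:ℝ) * t^2 / 2) :
    (μ {A | t ≤ |A a c|}).toReal
      ≤ ((N:ℝ) * t^2 / 2) * Real.exp (2 - (N:ℝ) * t^2 / 2) := by
  set γ : ℝ := (N:ℝ) * t^2 / 2 with hγdef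
  set p : ℕ := ⌊γ⌋₊ with hpdef
  have hp1 : 1 ≤ p := Nat.le_floor (by exact_mod_cast hγ)
  have hpγ : (p:ℝ) ≤ γ := Nat.floor_le (by linarith)
  have hγp : γ < p + 1 := Nat.lt_floor_add_one γ
  have hppos : (0:ℝ) < p := by exact_mod_cast hp1
  have hNpos : (0:ℝ) < (N:ℝ) := by nlinarith [sq_nonneg t]
  -- Markov
  have hfmeas : Measurable fun A : Matrix (Fin N) (Fin N) ℝ => clamp (A a c) ^ (2*p) :=
    (measurable_clampEntry a c).pow_const _
  have hfint : Integrable (fun A : Matrix (Fin N) (Fin N) ℝ => clamp (A a c) ^ (2*p)) μ := by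
    apply integrable_of_bdd hfmeas 1
    intro A
    rw [abs_pow]
    calc |clamp (A a c)| ^ (2*p) ≤ 1 ^ (2*p) :=
        pow_le_pow_left₀ (abs_nonneg _) (clamp_abs_le _) _
      _ = 1 := one_pow _
  have hmarkov := mul_meas_ge_le_integral_of_nonneg
    (ae_of_all μ fun A => even_pow_nonneg (clamp (A a c)) p) hfint (t^(2*p))
  -- event inclusion
  have hsub : {A : Matrix (Fin N) (Fin N) ℝ | t ≤ |A a c|}
      ⊆ {A : Matrix (Fin N) (Fin N) ℝ | t^(2*p) ≤ clamp (A a c) ^ (2*p)}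
        ∪ {A : Matrix (Fin N) (Fin N) ℝ | A * Aᵀ = 1}ᶜ := by
    intro A hA
    by_cases hO : A * Aᵀ = 1
    · left
      have hcl : clamp (A a c) = A a c := clamp_eq_self (orth_abs_le hO a c)
      have h6 : t^(2*p) ≤ |A a c|^(2*p) := pow_le_pow_left₀ ht.le hA _
      have habs : |A a c|^(2*p) = (A a c)^(2*p) := (even_two_mul p).pow_abs _
      show t^(2*p) ≤ clamp (A a c)^(2*p)
      rw [hcl, ← habs]
      exact h6
    · right; exact hO
  have hcompl : μ ({A : Matrix (Fin N) (Fin N) ℝ | A * Aᵀ = 1}ᶜ) = 0 := by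
    rw [measure_compl measurableSet_orth (measure_ne_top μ _), hsupp, measure_univ, tsub_self]
  have hmeasle : μ {A : Matrix (Fin N) (Fin N) ℝ | t ≤ |A a c|}
      ≤ μ {A : Matrix (Fin N) (Fin N) ℝ | t^(2*p) ≤ clamp (A a c) ^ (2*p)} := by
    calc μ {A : Matrix (Fin N) (Fin N) ℝ | t ≤ |A a c|}
        ≤ μ ({A : Matrix (Fin N) (Fin N) ℝ | t^(2*p) ≤ clamp (A a c) ^ (2*p)}
            ∪ {A : Matrix (Fin N) (Fin N) ℝ | A * Aᵀ = 1}ᶜ) := measure_mono hsub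
      _ ≤ μ {A : Matrix (Fin N) (Fin N) ℝ | t^(2*p) ≤ clamp (A a c) ^ (2*p)}
            + μ ({A : Matrix (Fin N) (Fin N) ℝ | A * Aᵀ = 1}ᶜ) := measure_union_le _ _
      _ = _ := by rw [hcompl, add_zero]
  have htoReal : (μ {A : Matrix (Fin N) (Fin N) ℝ | t ≤ |A a c|}).toReal
      ≤ (μ {A : Matrix (Fin N) (Fin N) ℝ | t^(2*p) ≤ clamp (A a c) ^ (2*p)}).toReal :=
    ENNReal.toReal_mono (measure_ne_top μ _) hmeasle
  -- combine with moment bound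
  have hmom := mom_pow_bound hsupp hinv a c p
  have ht2p : (0:ℝ) < t^(2*p) := pow_pos ht _
  have hP : (μ {A : Matrix (Fin N) (Fin N) ℝ | t ≤ |A a c|}).toReal
      ≤ 2^p * (p.factorial : ℝ) / ((N:ℝ)^p * t^(2*p)) := by
    rw [le_div_iff₀ (by positivity)]
    have h1 : (μ {A : Matrix (Fin N) (Fin N) ℝ | t^(2*p) ≤ clamp (A a c) ^ (2*p)}).toReal
        * t^(2*p) ≤ ∫ A, clamp (A a c) ^ (2*p) ∂μ := by
      rw [mul_comm]; exact hmarkov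
    calc (μ {A : Matrix (Fin N) (Fin N) ℝ | t ≤ |A a c|}).toReal * ((N:ℝ)^p * t^(2*p))
        ≤ (∫ A, clamp (A a c) ^ (2*p) ∂μ) * (N:ℝ)^p := by
          have hle := mul_le_mul_of_nonneg_right htoReal
            (le_of_lt (by positivity : (0:ℝ) < (N:ℝ)^p * t^(2*p)))
          calc (μ {A : Matrix (Fin N) (Fin N) ℝ | t ≤ |A a c|}).toReal * ((N:ℝ)^p * t^(2*p))
              ≤ (μ {A | t^(2*p) ≤ clamp (A a c) ^ (2*p)}).toReal * ((N:ℝ)^p * t^(2*p)) := hle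
            _ = ((μ {A | t^(2*p) ≤ clamp (A a c) ^ (2*p)}).toReal * t^(2*p)) * (N:ℝ)^p := by
                ring
            _ ≤ (∫ A, clamp (A a c) ^ (2*p) ∂μ) * (N:ℝ)^p :=
                mul_le_mul_of_nonneg_right h1 (by positivity)
      _ = (N:ℝ)^p * ∫ A, clamp (A a c) ^ (2*p) ∂μ := by ring
      _ ≤ 2^p * (p.factorial : ℝ) := hmom
  -- numeric estimate
  have hfact := factorial_le_exp p hp1
  have hnum : 2^p * (p.factorial : ℝ) / ((N:ℝ)^p * t^(2*p))
      ≤ γ * Real.exp (2 - γ) := by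
    have hNt : (N:ℝ) * t^2 = 2 * γ := by rw [hγdef]; ring
    have hden : (N:ℝ)^p * t^(2*p) = ((N:ℝ) * t^2)^p := by
      rw [mul_pow, ← pow_mul]
    have hratio : (2*(p:ℝ)/((N:ℝ)*t^2))^p ≤ 1 := by
      apply pow_le_one₀ (by positivity)
      rw [div_le_one (by positivity)]
      rw [hNt]
      linarith
    have hstep : 2^p * (p.factorial : ℝ) / ((N:ℝ)^p * t^(2*p))
        ≤ 2^p * ((p:ℝ)^(p+1) * Real.exp (1 - p)) / ((N:ℝ)^p * t^(2*p)) := by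
      apply div_le_div_of_nonneg_right ?_ (by positivity)
      · exact mul_le_mul_of_nonneg_left hfact (by positivity)
    have heq : 2^p * ((p:ℝ)^(p+1) * Real.exp (1 - p)) / ((N:ℝ)^p * t^(2*p))
        = (p:ℝ) * Real.exp (1 - p) * (2*(p:ℝ)/((N:ℝ)*t^2))^p := by
      rw [hden, div_pow, mul_pow]
      rw [pow_succ]
      field_simp
      ring
    have hstep2 : (p:ℝ) * Real.exp (1 - p) * (2*(p:ℝ)/((N:ℝ)*t^2))^p
        ≤ (p:ℝ) * Real.exp (1 - p) := by
      have hx : (0:ℝ) ≤ (p:ℝ) * Real.exp (1 - p) := by positivity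
      calc (p:ℝ) * Real.exp (1 - p) * (2*(p:ℝ)/((N:ℝ)*t^2))^p
          ≤ (p:ℝ) * Real.exp (1 - p) * 1 := mul_le_mul_of_nonneg_left hratio hx
        _ = (p:ℝ) * Real.exp (1 - p) := mul_one _
    have hstep3 : (p:ℝ) * Real.exp (1 - p) ≤ γ * Real.exp (2 - γ) := by
      have hexp : Real.exp (1 - (p:ℝ)) ≤ Real.exp (2 - γ) :=
        Real.exp_le_exp.2 (by linarith)
      have h0 : (0:ℝ) ≤ Real.exp (1 - (p:ℝ)) := (Real.exp_pos _).le
      exact mul_le_mul hpγ hexp h0 (by linarith)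
    calc 2^p * (p.factorial : ℝ) / ((N:ℝ)^p * t^(2*p))
        ≤ 2^p * ((p:ℝ)^(p+1) * Real.exp (1 - p)) / ((N:ℝ)^p * t^(2*p)) := hstep
      _ = (p:ℝ) * Real.exp (1 - p) * (2*(p:ℝ)/((N:ℝ)*t^2))^p := heq
      _ ≤ (p:ℝ) * Real.exp (1 - p) := hstep2
      _ ≤ γ * Real.exp (2 - γ) := hstep3
  exact hP.trans hnum

end Rec

lemma box_compact (c : ℝ) (m k : ℕ) :
    IsCompact {B : Matrix (Fin m) (Fin k) ℝ | ∀ i j, |B i j| ≤ c} := by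
  have h : {B : Matrix (Fin m) (Fin k) ℝ | ∀ i j, |B i j| ≤ c}
      = Set.univ.pi fun _ : Fin m => Set.univ.pi fun _ : Fin k => Set.Icc (-c) c := by
    ext B
    simp only [Set.mem_setOf_eq, abs_le]
    constructor
    · intro h
      exact Set.mem_univ_pi.2 fun i => Set.mem_univ_pi.2 fun j => h i j
    · intro h i j
      exact Set.mem_univ_pi.1 (Set.mem_univ_pi.1 h i) j
  rw [h]
  exact isCompact_univ_pi fun i => isCompact_univ_pi fun j => isCompact_Icc

/-- **Exponential tightness of `β_N·Z_N` at speed `N/β_N²`.** For every `ε > 0`, with the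
compact box `K = [-√(2mε), √(2mε)]^{m×k}`, `limsup_N (β_N²/N)·log ℙ(β_N Z_N ∉ K) ≤ -ε`;
in particular the sequence `β_N·Z_N` is exponentially tight with respect to the speed
`N/β_N²`. Here `μ N` is the Haar probability measure on `O(N)`, viewed as a measure on
`N × N` matrices. -/
theorem stmt_12
    (m k : ℕ)
    (μ : (N : ℕ) → Measure (Matrix (Fin N) (Fin N) ℝ))
    (hμ_prob : ∀ N, IsProbabilityMeasure (μ N))
    (hμ_supp : ∀ N, μ N {A | A * Aᵀ = 1} = 1)
    (hμ_inv : ∀ N (B : Matrix (Fin N) (Fin N) ℝ), B * Bᵀ = 1 →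
      (μ N).map (fun A => B * A) = μ N)
    (β : ℕ → ℝ) (hβ_pos : ∀ N, 0 < β N)
    (hβ_top : Tendsto β atTop atTop)
    (hβ_o : β =o[atTop] fun N => Real.sqrt N) :
    (∀ ε > (0 : ℝ),
      Filter.limsup (fun N => ((β N ^ 2 / N : ℝ) : EReal) *
          ENNReal.log (μ N {M | β N • blockEmb m k M ∉
            {B : Matrix (Fin m) (Fin k) ℝ | ∀ i j, |B i j| ≤ Real.sqrt (2 * m * ε)}}))
        atTop ≤ ((-ε : ℝ) : EReal)) ∧
    (∀ a > (0 : ℝ), ∃ K : Set (Matrix (Fin m) (Fin k) ℝ), IsCompact K ∧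
      Filter.limsup (fun N => ((β N ^ 2 / N : ℝ) : EReal) *
          ENNReal.log (μ N {M | β N • blockEmb m k M ∉ K})) atTop ≤ ((-a : ℝ) : EReal)) := by
  haveI := hμ_prob
  have main : ∀ ε > (0 : ℝ),
      Filter.limsup (fun N => ((β N ^ 2 / N : ℝ) : EReal) *
          ENNReal.log (μ N {M | β N • blockEmb m k M ∉
            {B : Matrix (Fin m) (Fin k) ℝ | ∀ i j, |B i j| ≤ Real.sqrt (2 * m * ε)}}))
        atTop ≤ ((-ε : ℝ) : EReal) := by
    intro ε hε
    -- degenerate case : m = 0 or k = 0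
    by_cases hmk : m = 0 ∨ k = 0
    · refine limsup_le_of_le (by isBoundedDefault) ?_
      filter_upwards [eventually_ge_atTop 1] with N hN1
      have hempty : {M : Matrix (Fin N) (Fin N) ℝ |
          ¬ ∀ (i : Fin m) (j : Fin k), |(β N • blockEmb m k M) i j| ≤ Real.sqrt (2 * m * ε)}
          = ∅ := by
        apply Set.eq_empty_iff_forall_notMem.2
        intro M hM
        apply hM
        intro i j
        rcases hmk with h0 | h0
        · exact absurd i.isLt (by omega)
        · exact absurd j.isLt (by omega)
      rw [hempty, measure_empty, ENNReal.log_zero]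
      have hu : (0:ℝ) < β N ^ 2 / N := by
        have h2 : (0:ℝ) < (N:ℝ) := by exact_mod_cast hN1
        exact div_pos (pow_pos (hβ_pos N) 2) h2
      rw [EReal.mul_bot_of_pos (by exact_mod_cast EReal.coe_pos.2 hu)]
      exact bot_le
    push_neg at hmk
    obtain ⟨hm0, hk0⟩ := hmk
    have hm1 : 1 ≤ m := Nat.one_le_iff_ne_zero.2 hm0
    have hk1 : 1 ≤ k := Nat.one_le_iff_ne_zero.2 hk0
    -- setup
    set s : ℝ := Real.sqrt (2 * m * ε) with hs
    have hmε : (0:ℝ) < 2 * m * ε := by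
      have : (1:ℝ) ≤ (m:ℝ) := by exact_mod_cast hm1
      nlinarith
    have hs2 : s ^ 2 = 2 * m * ε := Real.sq_sqrt hmε.le
    have hspos : 0 < s := Real.sqrt_pos.2 hmε
    set u : ℕ → ℝ := fun N => β N ^ 2 / N with hu
    set γ : ℕ → ℝ := fun N => m * ε * N / β N ^ 2 with hγ
    -- limits
    have hu0 : Tendsto u atTop (nhds 0) := by
      have h1 : (fun N => β N ^ 2) =o[atTop] fun N : ℕ => Real.sqrt N ^ 2 :=
        hβ_o.pow two_pos
      have h2 : (fun N => β N ^ 2) =o[atTop] fun N : ℕ => (N:ℝ) := by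
        apply h1.congr' EventuallyEq.rfl
        filter_upwards with N
        exact Real.sq_sqrt (Nat.cast_nonneg N)
      exact h2.tendsto_div_nhds_zero
    have hupos : ∀ᶠ N in atTop, 0 < u N := by
      filter_upwards [eventually_ge_atTop 1] with N hN1
      have h2 : (0:ℝ) < (N:ℝ) := by exact_mod_cast hN1
      simp only [hu]
      exact div_pos (pow_pos (hβ_pos N) 2) h2
    have hγtop : Tendsto γ atTop atTop := by
      have h1 : Tendsto (fun N => (u N)⁻¹) atTop atTop :=
        Filter.Tendsto.inv_tendsto_nhdsGT_zero (tendsto_nhdsWithin_iff.mpr ⟨hu0, hupos⟩)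
      have h2 : Tendsto (fun N => (m * ε : ℝ) * (u N)⁻¹) atTop atTop :=
        h1.const_mul_atTop (by positivity)
      apply h2.congr'
      filter_upwards [eventually_ge_atTop 1] with N hN1
      have hN : (0:ℝ) < (N:ℝ) := by exact_mod_cast hN1
      have hβN := hβ_pos N
      rw [hu, hγ]
      field_simp
    -- the eventual bound
    set r : ℕ → ℝ := fun N => u N * Real.log ((m*k : ℝ) * (γ N * Real.exp (2 - γ N)))
      with hr
    have hev : ∀ᶠ N in atTop,
        ((β N ^ 2 / N : ℝ) : EReal) *
          ENNReal.log (μ N {M | β N • blockEmb m k M ∉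
            {B : Matrix (Fin m) (Fin k) ℝ | ∀ i j, |B i j| ≤ s}}) ≤ ((r N : ℝ) : EReal) := by
      filter_upwards [eventually_ge_atTop 1, eventually_ge_atTop m, eventually_ge_atTop k,
        hγtop.eventually_ge_atTop 1, hupos] with N hN1 hNm hNk hγ1 huN
      have hNpos : (0:ℝ) < (N:ℝ) := by exact_mod_cast hN1
      have hβN := hβ_pos N
      set t : ℝ := s / β N with htdef
      have ht : 0 < t := by positivity
      have ht2 : (N:ℝ) * t ^ 2 / 2 = γ N := by
        rw [htdef, hγ, div_pow, hs2]
        field_simp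
      set E := {M : Matrix (Fin N) (Fin N) ℝ | β N • blockEmb m k M ∉
          {B : Matrix (Fin m) (Fin k) ℝ | ∀ i j, |B i j| ≤ s}} with hE
      set D : ℝ := (m*k : ℝ) * (γ N * Real.exp (2 - γ N)) with hD
      have hγNpos : (0:ℝ) < γ N := lt_of_lt_of_le one_pos hγ1
      have hDpos : 0 < D := by
        rw [hD]
        have h1 : (0:ℝ) < (m:ℝ) * k := by
          have : (1:ℝ) ≤ (m:ℝ) := by exact_mod_cast hm1
          have : (1:ℝ) ≤ (k:ℝ) := by exact_mod_cast hk1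
          positivity
        positivity
      -- index embeddings
      have hic : ∀ i : Fin m, (i : ℕ) < N := fun i => lt_of_lt_of_le i.isLt hNm
      have hjc : ∀ j : Fin k, (j : ℕ) < N := fun j => lt_of_lt_of_le j.isLt hNk
      -- event inclusion
      have hsub : E ⊆ ⋃ i : Fin m, ⋃ j : Fin k,
          {M : Matrix (Fin N) (Fin N) ℝ | t ≤ |M ⟨i, hic i⟩ ⟨j, hjc j⟩|} := by
        intro M hM
        rw [hE, Set.mem_setOf_eq] at hM
        have hM' : ∃ i j, ¬ |(β N • blockEmb m k M) i j| ≤ s := by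
          by_contra hcon
          push_neg at hcon
          exact hM fun i j => hcon i j
        obtain ⟨i, j, hij⟩ := hM'
        push_neg at hij
        refine Set.mem_iUnion.2 ⟨i, Set.mem_iUnion.2 ⟨j, ?_⟩⟩
        have hblock : blockEmb m k M i j = M ⟨i, hic i⟩ ⟨j, hjc j⟩ := by
          show (Matrix.of fun i j => if h : (i : ℕ) < N ∧ (j : ℕ) < N
            then M ⟨i, h.1⟩ ⟨j, h.2⟩ else 0) i j = _
          rw [Matrix.of_apply, dif_pos ⟨hic i, hjc j⟩]
        have hsmul : (β N • blockEmb m k M) i j = β N * blockEmb m k M i j := rfl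
        rw [hsmul, hblock, abs_mul, abs_of_pos hβN] at hij
        show t ≤ |M ⟨i, hic i⟩ ⟨j, hjc j⟩|
        rw [htdef, div_le_iff₀ hβN]
        linarith [hij.le, mul_comm (β N) |M ⟨i, hic i⟩ ⟨j, hjc j⟩|]
      -- union bound + tail bound
      have htail : ∀ (a c : Fin N),
          μ N {A : Matrix (Fin N) (Fin N) ℝ | t ≤ |A a c|}
            ≤ ENNReal.ofReal (γ N * Real.exp (2 - γ N)) := by
        intro a c
        rw [ENNReal.le_ofReal_iff_toReal_le (measure_ne_top _ _) (by positivity)]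
        have := entry_tail (hμ_supp N) (hμ_inv N) a c ht (by rw [ht2]; exact hγ1)
        rwa [ht2] at this
      have hmeasE : μ N E ≤ ENNReal.ofReal D := by
        calc μ N E ≤ μ N (⋃ i : Fin m, ⋃ j : Fin k,
            {M : Matrix (Fin N) (Fin N) ℝ | t ≤ |M ⟨i, hic i⟩ ⟨j, hjc j⟩|}) :=
              measure_mono hsub
          _ ≤ ∑' i : Fin m, μ N (⋃ j : Fin k,
              {M : Matrix (Fin N) (Fin N) ℝ | t ≤ |M ⟨i, hic i⟩ ⟨j, hjc j⟩|}) :=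
              measure_iUnion_le _
          _ = ∑ i : Fin m, μ N (⋃ j : Fin k,
              {M : Matrix (Fin N) (Fin N) ℝ | t ≤ |M ⟨i, hic i⟩ ⟨j, hjc j⟩|}) :=
              tsum_fintype _
          _ ≤ ∑ i : Fin m, ∑ j : Fin k,
              μ N {M : Matrix (Fin N) (Fin N) ℝ | t ≤ |M ⟨i, hic i⟩ ⟨j, hjc j⟩|} := by
              apply Finset.sum_le_sum
              intro i _
              exact (measure_iUnion_le _).trans_eq (tsum_fintype _)
          _ ≤ ∑ _i : Fin m, ∑ _j : Fin k, ENNReal.ofReal (γ N * Real.exp (2 - γ N)) :=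
              Finset.sum_le_sum fun i _ => Finset.sum_le_sum fun j _ => htail _ _
          _ = (m * k : ℕ) * ENNReal.ofReal (γ N * Real.exp (2 - γ N)) := by
              simp [Finset.sum_const, mul_assoc]
          _ = ENNReal.ofReal D := by
              rw [hD, ← ENNReal.ofReal_natCast (m*k), ← ENNReal.ofReal_mul (by positivity)]
              congr 1
              push_cast
              ring
      -- conclude EReal inequality
      have hcoef : ((β N ^ 2 / N : ℝ) : EReal) = ((u N : ℝ) : EReal) := by simp only [hu]
      rw [hcoef]
      show ((u N : ℝ) : EReal) * ENNReal.log (μ N E) ≤ ((r N : ℝ) : EReal)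
      by_cases hzero : μ N E = 0
      · rw [hzero, ENNReal.log_zero, EReal.mul_bot_of_pos (EReal.coe_pos.2 huN)]
        exact bot_le
      · have hfin : μ N E ≠ ⊤ := measure_ne_top _ _
        have hlog : ENNReal.log (μ N E) = ((Real.log (μ N E).toReal : ℝ) : EReal) :=
          ENNReal.log_pos_real' (ENNReal.toReal_pos hzero hfin)
        rw [hlog, ← EReal.coe_mul, EReal.coe_le_coe_iff]
        simp only [hr]
        apply mul_le_mul_of_nonneg_left _ huN.le
        rw [← hD]
        apply Real.log_le_log (ENNReal.toReal_pos hzero hfin)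
        calc (μ N E).toReal ≤ (ENNReal.ofReal D).toReal :=
            ENNReal.toReal_mono (by simp) hmeasE
          _ = D := ENNReal.toReal_ofReal hDpos.le
      -- note : target r N uses same D
    -- limit of r
    have hrlim : Tendsto r atTop (nhds (-(m * ε))) := by
      have hgoal : Tendsto (fun N => u N * Real.log (m*k : ℝ)
          + m * ε * (Real.log (γ N) / γ N) + 2 * u N - m * ε) atTop (nhds (-(m*ε))) := by
        have t1 : Tendsto (fun N => u N * Real.log (m*k : ℝ)) atTop (nhds 0) := by
          simpa using hu0.mul_const (Real.log (m*k : ℝ))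
        have t2 : Tendsto (fun N => m * ε * (Real.log (γ N) / γ N)) atTop (nhds 0) := by
          have h3 : Tendsto (fun x : ℝ => Real.log x / x) atTop (nhds 0) :=
            Real.isLittleO_log_id_atTop.tendsto_div_nhds_zero
          simpa using (h3.comp hγtop).const_mul (m * ε : ℝ)
        have t3 : Tendsto (fun N => 2 * u N) atTop (nhds 0) := by
          simpa using hu0.const_mul (2:ℝ)
        have := ((t1.add t2).add t3).sub_const (m * ε : ℝ)
        simpa using this
      apply hgoal.congr'
      filter_upwards [eventually_ge_atTop 1, hγtop.eventually_ge_atTop 1] with N hN1 hγ1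
      have hNpos : (0:ℝ) < (N:ℝ) := by exact_mod_cast hN1
      have hβN := hβ_pos N
      have hγNpos : (0:ℝ) < γ N := lt_of_lt_of_le one_pos hγ1
      have hmk : (0:ℝ) < (m:ℝ) * k := by
        have h1 : (1:ℝ) ≤ (m:ℝ) := by exact_mod_cast hm1
        have h2 : (1:ℝ) ≤ (k:ℝ) := by exact_mod_cast hk1
        nlinarith
      have huγ : u N * γ N = m * ε := by
        rw [hu, hγ]
        field_simp
      have hulogγ : u N * Real.log (γ N) = m * ε * (Real.log (γ N) / γ N) := by
        rw [← huγ]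
        field_simp
      simp only [hr]
      rw [Real.log_mul (ne_of_gt hmk) (by positivity),
        Real.log_mul (ne_of_gt hγNpos) (Real.exp_ne_zero _), Real.log_exp]
      rw [mul_add, mul_add, hulogγ, mul_sub]
      rw [huγ]
      ring
    -- conclude
    have hlimsup1 : Filter.limsup (fun N => ((r N : ℝ) : EReal)) atTop
        = ((-(m * ε) : ℝ) : EReal) := by
      have : Tendsto (fun N => ((r N : ℝ) : EReal)) atTop (nhds ((-(m*ε) : ℝ) : EReal)) :=
        EReal.tendsto_coe.2 hrlim
      exact this.limsup_eq
    calc Filter.limsup (fun N => ((β N ^ 2 / N : ℝ) : EReal) *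
          ENNReal.log (μ N {M | β N • blockEmb m k M ∉
            {B : Matrix (Fin m) (Fin k) ℝ | ∀ i j, |B i j| ≤ Real.sqrt (2 * m * ε)}})) atTop
        ≤ Filter.limsup (fun N => ((r N : ℝ) : EReal)) atTop := limsup_le_limsup hev
      _ = ((-(m * ε) : ℝ) : EReal) := hlimsup1
      _ ≤ ((-ε : ℝ) : EReal) := by
          rw [EReal.coe_le_coe_iff]
          have h1 : (1:ℝ) ≤ (m:ℝ) := by exact_mod_cast hm1
          nlinarith
  constructor
  · exact main
  · intro a ha
    exact ⟨{B : Matrix (Fin m) (Fin k) ℝ | ∀ i j, |B i j| ≤ Real.sqrt (2 * m * a)},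
      box_compact _ m k, main a ha⟩
end
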